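/- Let n ≥ 1 and k ≥ 0 be integers and let p_1,…,p_n ∈ [0,1] satisfy Σ_{i=1}^n p_i/i ≤ k. Then (1/n)·Σ_{i=1}^n p_i ≤ (1 + 1/n)·(1 − e^{−k}). -/

import Mathlib

open Finset

/-- **Analytic core of the secretary lower bound.**
For `p₁,…,pₙ ∈ [0,1]` with `∑ᵢ pᵢ/i ≤ k`, one has
`(1/n)·∑ᵢ pᵢ ≤ (1 + 1/n)·(1 − e^{−k})`. -/
theorem avg_p_le_of_sum_div_le (n k : ℕ) (hn : 1 ≤ n) (p : Fin n → ℝ)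
    (hp : ∀ i, p i ∈ Set.Icc (0 : ℝ) 1)
    (hsum : ∑ i, p i / (((i : ℕ) : ℝ) + 1) ≤ (k : ℝ)) :
    (1 / (n : ℝ)) * ∑ i, p i ≤ (1 + 1 / (n : ℝ)) * (1 - Real.exp (-(k : ℝ))) := by
  classical
  set q : ℕ → ℝ := fun i => if h : i < n then p ⟨i, h⟩ else 0 with hq
  have hq0 : ∀ i, 0 ≤ q i := by
    intro i; simp only [hq]; split
    · exact (hp _).1
    · exact le_refl 0
  have hq1 : ∀ i, q i ≤ 1 := by
    intro i; simp only [hq]; split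
    · exact (hp _).2
    · norm_num
  have hpq : ∀ i : Fin n, p i = q (i : ℕ) := by
    intro i; simp only [hq, dif_pos i.isLt]
  have hsum' : ∑ i ∈ range n, q i / ((i : ℝ) + 1) ≤ (k : ℝ) := by
    calc ∑ i ∈ range n, q i / ((i : ℝ) + 1)
        = ∑ i : Fin n, q (i : ℕ) / (((i : ℕ) : ℝ) + 1) :=
          (Fin.sum_univ_eq_sum_range (fun i => q i / ((i : ℝ) + 1)) n).symm
      _ = ∑ i : Fin n, p i / (((i : ℕ) : ℝ) + 1) := by
          apply Finset.sum_congr rfl; intro i _; rw [hpq]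
      _ ≤ (k : ℝ) := hsum
  set A : ℕ → ℝ := fun j => ((n : ℝ) + 1) - ∑ i ∈ Ico j n, q i with hA
  have hAdef : ∀ j : ℕ, A j = ((n : ℝ) + 1) - ∑ i ∈ Ico j n, q i := fun j => rfl
  have hAge : ∀ j : ℕ, j ≤ n → (j : ℝ) + 1 ≤ A j := by
    intro j hj
    have h1 : ∑ i ∈ Ico j n, q i ≤ ((n - j : ℕ) : ℝ) := by
      calc ∑ i ∈ Ico j n, q i ≤ ∑ i ∈ Ico j n, (1 : ℝ) :=
            Finset.sum_le_sum fun i _ => hq1 i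
        _ = ((n - j : ℕ) : ℝ) := by simp [Nat.card_Ico]
    have h2 : ((n - j : ℕ) : ℝ) = (n : ℝ) - (j : ℝ) := by
      rw [Nat.cast_sub hj]
    rw [hAdef]
    rw [h2] at h1
    linarith
  have hApos : ∀ j : ℕ, j ≤ n → 0 < A j := by
    intro j hj
    have : (0 : ℝ) < (j : ℝ) + 1 := by positivity
    linarith [hAge j hj]
  have hstep : ∀ j, j < n → A (j + 1) = A j + q j := by
    intro j hj
    rw [hAdef, hAdef]
    rw [Finset.sum_eq_sum_Ico_succ_bot hj]
    ring
  have key : ∀ m, m ≤ n →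
      Real.log (A m) - Real.log (A 0) ≤ ∑ j ∈ range m, q j / ((j : ℝ) + 1) := by
    intro m
    induction m with
    | zero => intro _; simp
    | succ m ih =>
      intro hm
      have hm' : m < n := hm
      have ihm := ih hm'.le
      have hAm := hApos m hm'.le
      have hAm1 := hApos (m + 1) hm
      have hlog : Real.log (A (m + 1)) - Real.log (A m) ≤ q m / ((m : ℝ) + 1) := by
        have h1 : Real.log (A (m + 1)) - Real.log (A m) = Real.log (A (m + 1) / A m) := by
          rw [Real.log_div hAm1.ne' hAm.ne']
        rw [h1]
        have h2 : Real.log (A (m + 1) / A m) ≤ A (m + 1) / A m - 1 :=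
          Real.log_le_sub_one_of_pos (div_pos hAm1 hAm)
        have h3 : A (m + 1) / A m - 1 = q m / A m := by
          rw [hstep m hm']; field_simp; ring
        have h4 : q m / A m ≤ q m / ((m : ℝ) + 1) :=
          div_le_div_of_nonneg_left (hq0 m) (by positivity) (hAge m hm'.le)
        linarith
      rw [Finset.sum_range_succ]
      linarith
  have hAn : A n = (n : ℝ) + 1 := by
    rw [hAdef, Finset.Ico_self, Finset.sum_empty, sub_zero]
  set S : ℝ := ∑ i ∈ range n, q i with hS
  have hA0 : A 0 = (n : ℝ) + 1 - S := by
    rw [hAdef, hS, Finset.range_eq_Ico]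
  have hmain : Real.log ((n : ℝ) + 1) - Real.log ((n : ℝ) + 1 - S) ≤ (k : ℝ) := by
    have h := key n le_rfl
    rw [hAn, hA0] at h
    exact h.trans hsum'
  have hA0pos : 0 < (n : ℝ) + 1 - S := hA0 ▸ hApos 0 (Nat.zero_le n)
  have hexp : ((n : ℝ) + 1) * Real.exp (-(k : ℝ)) ≤ (n : ℝ) + 1 - S := by
    have h1 : Real.log ((n : ℝ) + 1) - (k : ℝ) ≤ Real.log ((n : ℝ) + 1 - S) := by
      linarith
    have h2 := Real.exp_le_exp.mpr h1
    rw [Real.exp_sub, Real.exp_log hA0pos,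
      Real.exp_log (by positivity : (0:ℝ) < (n:ℝ)+1)] at h2
    calc ((n : ℝ) + 1) * Real.exp (-(k : ℝ))
        = ((n : ℝ) + 1) / Real.exp (k : ℝ) := by
          rw [Real.exp_neg]; ring
      _ ≤ (n : ℝ) + 1 - S := h2
  have hSle : S ≤ ((n : ℝ) + 1) * (1 - Real.exp (-(k : ℝ))) := by nlinarith
  have hsumP : (∑ i : Fin n, p i) = S := by
    rw [hS]
    rw [show (∑ i : Fin n, p i) = ∑ i : Fin n, q (i : ℕ) from
      Finset.sum_congr rfl fun i _ => hpq i]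
    exact Fin.sum_univ_eq_sum_range q n
  rw [hsumP]
  have hnpos : (0 : ℝ) < n := by exact_mod_cast hn
  have h := mul_le_mul_of_nonneg_left hSle (by positivity : (0:ℝ) ≤ 1 / (n : ℝ))
  calc (1 / (n : ℝ)) * S ≤ (1 / (n : ℝ)) * (((n : ℝ) + 1) * (1 - Real.exp (-(k : ℝ)))) := h
    _ = (1 + 1 / (n : ℝ)) * (1 - Real.exp (-(k : ℝ))) := by
        field_simp
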